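/- arXiv:2301.08270 — 3 statements merged into one kernel-verified Lean document; each statement's English description precedes it below -/
import Mathlib

section
/- Let n ≥ 3 be an integer, c > (n−1)/(4n) and Λ > 0 real numbers, and let β₂ be as defined. Suppose w > 2π√((c/Λ)·((4c−1)n + 2 − 4c)/((4c−1)n + 1)). Then for any b ∈ ℝ and any real r with (π/w)·r + b ∈ (0, π), the function f(r) = −(π/w)·cot((π/w)·r + b) satisfies β₂·f(r)² − β₂·|f′(r)| + nΛ/(4c(n−1)) = nΛ/(4c(n−1)) − β₂π²/w², and this quantity is strictly positive. -/
open Real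

lemma my_hasDerivAt_cot (x : ℝ) (hx : Real.sin x ≠ 0) :
    HasDerivAt Real.cot (-(1 / Real.sin x ^ 2)) x := by
  have h := (Real.hasDerivAt_cos x).div (Real.hasDerivAt_sin x) hx
  have heq : (fun y => Real.cos y / Real.sin y) = Real.cot := by
    funext y; rw [Real.cot_eq_cos_div_sin]
  rw [show Real.cos / Real.sin = Real.cot from heq] at h
  refine h.congr_deriv ?_
  have h2 : Real.sin x ^ 2 + Real.cos x ^ 2 = 1 := Real.sin_sq_add_cos_sq x
  field_simp
  nlinarith [h2]

/-- The differential identity and strict positivity for the cotangent potential in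
the spinorial Callias operator proof: if the band width
`w > 2π√((c/Λ)((4c−1)n+2−4c)/((4c−1)n+1))`, then `f(r) = −(π/w) cot((π/w) r + b)`
satisfies `β₂ f² − β₂ |f′| + nΛ/(4c(n−1)) = nΛ/(4c(n−1)) − β₂ π²/w² > 0`
wherever `(π/w) r + b ∈ (0, π)`. -/
theorem callias_potential_inequality (n : ℕ) (hn : 3 ≤ n) (c Λ : ℝ)
    (hc : ((n : ℝ) - 1) / (4 * n) < c) (hΛ : 0 < Λ)
    (β β₁ β₂ : ℝ) (hβ : β = (n : ℝ) / ((n : ℝ) - 1) - 1 / (4 * c))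
    (hβ₁ : β₁ = 1 / ((n : ℝ) * ((n : ℝ) - 1)) - 1 / (β * ((n : ℝ) - 1) ^ 2))
    (hβ₂ : β₂ = 1 - (n : ℝ) * β₁ / ((n : ℝ) - 1))
    (w : ℝ)
    (hw : 2 * π * Real.sqrt ((c / Λ) * (((4 * c - 1) * n + 2 - 4 * c)
          / ((4 * c - 1) * n + 1))) < w) :
    ∀ (b : ℝ) (f : ℝ → ℝ),
      f = (fun r => -(π / w) * Real.cot ((π / w) * r + b)) →
      ∀ r : ℝ, (π / w) * r + b ∈ Set.Ioo (0 : ℝ) π →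
        (β₂ * (f r) ^ 2 - β₂ * |deriv f r| + (n : ℝ) * Λ / (4 * c * ((n : ℝ) - 1))
            = (n : ℝ) * Λ / (4 * c * ((n : ℝ) - 1)) - β₂ * π ^ 2 / w ^ 2 ∧
          0 < (n : ℝ) * Λ / (4 * c * ((n : ℝ) - 1)) - β₂ * π ^ 2 / w ^ 2) := by
  -- basic positivity facts
  have hn3 : (3 : ℝ) ≤ (n : ℝ) := by exact_mod_cast hn
  have hn1 : (0 : ℝ) < (n : ℝ) - 1 := by linarith
  have hn0 : (0 : ℝ) < (n : ℝ) := by linarith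
  have hcpos : 0 < c := lt_trans (by positivity) hc
  have hc' : (n : ℝ) - 1 < c * (4 * n) := by
    rw [div_lt_iff₀ (by positivity)] at hc; linarith [hc]
  have hA : 0 < (4 * c - 1) * (n : ℝ) + 1 := by nlinarith
  set A : ℝ := (4 * c - 1) * (n : ℝ) + 1 with hAdef
  have hβval : β = A / (4 * c * ((n : ℝ) - 1)) := by
    rw [hβ, hAdef]; field_simp; ring
  have hβpos : 0 < β := by rw [hβval]; positivity
  have hβ₂val : β₂ = (((n : ℝ) - 1) * A + 1) / (((n : ℝ) - 1) * A) := by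
    rw [hβ₂, hβ₁, hβval]
    field_simp
    ring
  have hβ₂pos : 0 < β₂ := by
    rw [hβ₂val]
    have : 0 < ((n : ℝ) - 1) * A := by positivity
    positivity
  -- w is positive
  have hwpos : 0 < w := lt_of_le_of_lt (by positivity) hw
  -- square the width bound
  have hK : 0 ≤ (c / Λ) * ((A + 1 - 4 * c) / A) := by
    have : 0 ≤ A + 1 - 4 * c := by nlinarith
    positivity
  have hKeq : (4 * c - 1) * (n : ℝ) + 2 - 4 * c = A + 1 - 4 * c := by
    rw [hAdef]; ring
  have hw2 : 4 * π ^ 2 * ((c / Λ) * ((A + 1 - 4 * c) / A)) < w ^ 2 := by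
    rw [hKeq] at hw
    have h1 : (2 * π * Real.sqrt ((c / Λ) * ((A + 1 - 4 * c) / A))) ^ 2 < w ^ 2 := by
      apply pow_lt_pow_left₀ hw (by positivity) (by norm_num)
    calc 4 * π ^ 2 * ((c / Λ) * ((A + 1 - 4 * c) / A))
        = (2 * π * Real.sqrt ((c / Λ) * ((A + 1 - 4 * c) / A))) ^ 2 := by
          rw [mul_pow, mul_pow, Real.sq_sqrt hK]; ring
      _ < w ^ 2 := h1
  intro b f hf r hr
  obtain ⟨hr0, hrπ⟩ := hr
  set u : ℝ := (π / w) * r + b with hu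
  have hsin : 0 < Real.sin u := Real.sin_pos_of_pos_of_lt_pi hr0 hrπ
  have hsin' : Real.sin u ≠ 0 := ne_of_gt hsin
  -- compute the derivative of f
  have hd : HasDerivAt f ((π / w) ^ 2 * (1 / Real.sin u ^ 2)) r := by
    have hgu : HasDerivAt (fun r : ℝ => (π / w) * r + b) (π / w) r := by
      simpa using ((hasDerivAt_id r).const_mul (π / w)).add_const b
    have hcot := (my_hasDerivAt_cot u hsin').comp r hgu
    have := hcot.const_mul (-(π / w))
    rw [hf]
    refine this.congr_deriv ?_
    ring
  have hderiv : deriv f r = (π / w) ^ 2 * (1 / Real.sin u ^ 2) := hd.deriv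
  have habs : |deriv f r| = (π / w) ^ 2 * (1 / Real.sin u ^ 2) := by
    rw [hderiv, abs_of_nonneg]; positivity
  have hfr : f r = -(π / w) * Real.cot u := by rw [hf]
  have hcotval : Real.cot u = Real.cos u / Real.sin u := Real.cot_eq_cos_div_sin u
  have hpyth : Real.sin u ^ 2 + Real.cos u ^ 2 = 1 := Real.sin_sq_add_cos_sq u
  have hw0 : w ≠ 0 := ne_of_gt hwpos
  constructor
  · rw [hfr, habs, hcotval]
    have hsq : (-(π / w) * (Real.cos u / Real.sin u)) ^ 2
        - (π / w) ^ 2 * (1 / Real.sin u ^ 2) = -(π ^ 2 / w ^ 2) := by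
      have hcos2 : Real.cos u ^ 2 = 1 - Real.sin u ^ 2 := by linarith
      field_simp [hcos2]
      linear_combination hpyth
    linear_combination β₂ * hsq
  · -- positivity
    rw [sub_pos]
    rw [hβ₂val, div_mul_eq_mul_div, div_div, div_lt_div_iff₀ (by positivity) (by positivity)]
    -- remains: ((n-1)*A+1) * π^2 * (4*c*(n-1)) < n*Λ*((n-1)*A*w^2)
    have key : (n : ℝ) * (A + 1 - 4 * c) = ((n : ℝ) - 1) * A + 1 := by
      rw [hAdef]; ring
    have e : (c / Λ) * ((A + 1 - 4 * c) / A) = c * (A + 1 - 4 * c) / (Λ * A) := by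
      rw [div_mul_div_comm]
    rw [e, mul_div_assoc'] at hw2
    have h2 : 4 * π ^ 2 * (c * (A + 1 - 4 * c)) < w ^ 2 * (Λ * A) :=
      (div_lt_iff₀ (by positivity)).mp hw2
    calc (((n : ℝ) - 1) * A + 1) * π ^ 2 * (4 * c * ((n : ℝ) - 1))
        = (((n : ℝ) - 1) * (n : ℝ)) * (4 * π ^ 2 * (c * (A + 1 - 4 * c))) := by
          rw [← key]; ring
      _ < (((n : ℝ) - 1) * (n : ℝ)) * (w ^ 2 * (Λ * A)) :=
          mul_lt_mul_of_pos_left h2 (mul_pos hn1 hn0)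
      _ = (n : ℝ) * Λ * (((n : ℝ) - 1) * A * w ^ 2) := by ring
end

section
/- Fix real numbers c > 1/6 and α > 0, and on (0, π/α) define φ(ρ) = (sin(αρ))^((4c−1)/(6c−1)), u₀(ρ) = (sin(αρ))^(2c/(6c−1)), and R(ρ) = −2(φ′(ρ)² + 2φ(ρ)φ″(ρ))/φ(ρ)². Then for every ρ ∈ (0, π/α), −u₀″(ρ) − 2(φ′(ρ)/φ(ρ))·u₀′(ρ) + c·R(ρ)·u₀(ρ) = Λ′_c·u₀(ρ), where Λ′_c = (16c² − 2c)α²/(6c − 1) (equivalently Λ′_c = 2c(8 − 1/c)α²/(6 − 1/c)). -/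
open Real

lemma sin_pos_of_mem (α : ℝ) (hα : 0 < α) {ρ : ℝ} (hρ : ρ ∈ Set.Ioo (0:ℝ) (π/α)) :
    0 < Real.sin (α * ρ) := by
  apply Real.sin_pos_of_pos_of_lt_pi
  · exact mul_pos hα hρ.1
  · have := (lt_div_iff₀' hα).mp hρ.2
    linarith

lemma hd1 (α p : ℝ) (hα : 0 < α) {ρ : ℝ} (hρ : ρ ∈ Set.Ioo (0:ℝ) (π/α)) :
    HasDerivAt (fun x => Real.sin (α * x) ^ p)
      (p * α * Real.cos (α * ρ) * Real.sin (α * ρ) ^ (p - 1)) ρ := by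
  have hs := sin_pos_of_mem α hα hρ
  have hlin : HasDerivAt (fun x : ℝ => α * x) α ρ := by
    simpa using (hasDerivAt_id ρ).const_mul α
  have hsin : HasDerivAt (fun x => Real.sin (α * x)) (Real.cos (α * ρ) * α) ρ :=
    (Real.hasDerivAt_sin _).comp ρ hlin
  have h := (Real.hasDerivAt_rpow_const (p := p) (Or.inl hs.ne')).comp ρ hsin
  exact h.congr_deriv (by ring)

lemma hd2 (α p : ℝ) (hα : 0 < α) {ρ : ℝ} (hρ : ρ ∈ Set.Ioo (0:ℝ) (π/α)) :
    deriv (deriv (fun x => Real.sin (α * x) ^ p)) ρ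
      = p * α ^ 2 * ((p - 1) * Real.cos (α * ρ) ^ 2 * Real.sin (α * ρ) ^ (p - 2)
          - Real.sin (α * ρ) ^ p) := by
  have heq : deriv (fun x => Real.sin (α * x) ^ p)
      =ᶠ[nhds ρ] fun x => p * α * Real.cos (α * x) * Real.sin (α * x) ^ (p - 1) := by
    filter_upwards [Ioo_mem_nhds hρ.1 hρ.2] with x hx
    exact (hd1 α p hα hx).deriv
  rw [heq.deriv_eq]
  have hs := sin_pos_of_mem α hα hρ
  have hlin : HasDerivAt (fun x : ℝ => α * x) α ρ := by
    simpa using (hasDerivAt_id ρ).const_mul α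
  have hcos : HasDerivAt (fun x => Real.cos (α * x)) (-Real.sin (α * ρ) * α) ρ :=
    (Real.hasDerivAt_cos _).comp ρ hlin
  have h1 := hd1 α (p - 1) hα hρ
  have h : HasDerivAt (fun x => p * α * Real.cos (α * x) * Real.sin (α * x) ^ (p - 1))
      (p * α * ((-Real.sin (α * ρ) * α) * Real.sin (α * ρ) ^ (p - 1)
        + Real.cos (α * ρ) * ((p - 1) * α * Real.cos (α * ρ) * Real.sin (α * ρ) ^ (p - 1 - 1)))) ρ := by
    have := ((hcos.mul h1).const_mul (p * α))
    exact this.congr_of_eventuallyEq (Filter.Eventually.of_forall fun x => by simp only [Pi.mul_apply]; ring)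
  rw [h.deriv]
  have hsp : Real.sin (α * ρ) ^ (p - 1) * Real.sin (α * ρ) = Real.sin (α * ρ) ^ p := by
    rw [← Real.rpow_add_one hs.ne' (p - 1)]; ring_nf
  have : p - 1 - 1 = p - 2 := by ring
  rw [this]
  linear_combination (-(p * α ^ 2)) * hsp


/-- The model eigenfunction identity in the equality case of the 3-dimensional
spectral torical band inequality: with `φ(ρ) = (sin(αρ))^((4c−1)/(6c−1))`,
`u₀(ρ) = (sin(αρ))^(2c/(6c−1))`, and `R = −2(φ′² + 2φφ″)/φ²`, one has
`−u₀″ − 2(φ′/φ)u₀′ + cRu₀ = Λ′_c u₀` on `(0, π/α)`, where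
`Λ′_c = (16c² − 2c)α²/(6c − 1)`. -/
theorem model_eigenfunction_identity (c α : ℝ) (hc : 1 / 6 < c) (hα : 0 < α)
    (φ u₀ R : ℝ → ℝ)
    (hφ : φ = fun ρ => Real.sin (α * ρ) ^ ((4 * c - 1) / (6 * c - 1)))
    (hu₀ : u₀ = fun ρ => Real.sin (α * ρ) ^ (2 * c / (6 * c - 1)))
    (hR : R = fun ρ =>
      -2 * ((deriv φ ρ) ^ 2 + 2 * φ ρ * deriv (deriv φ) ρ) / (φ ρ) ^ 2) :
    ∀ ρ ∈ Set.Ioo (0 : ℝ) (π / α),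
      -(deriv (deriv u₀) ρ) - 2 * (deriv φ ρ / φ ρ) * deriv u₀ ρ + c * R ρ * u₀ ρ
        = ((16 * c ^ 2 - 2 * c) * α ^ 2 / (6 * c - 1)) * u₀ ρ := by
  subst hφ hu₀ hR
  intro ρ hρ
  have hs := sin_pos_of_mem α hα hρ
  have hd6 : (6 * c - 1) ≠ 0 := by nlinarith
  simp only []
  rw [(hd1 α ((4 * c - 1) / (6 * c - 1)) hα hρ).deriv,
      (hd1 α (2 * c / (6 * c - 1)) hα hρ).deriv,
      hd2 α ((4 * c - 1) / (6 * c - 1)) hα hρ,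
      hd2 α (2 * c / (6 * c - 1)) hα hρ]
  have e1 : ∀ p : ℝ, Real.sin (α * ρ) ^ (p - 1)
      = Real.sin (α * ρ) ^ p / Real.sin (α * ρ) := by
    intro p; rw [Real.rpow_sub hs, Real.rpow_one]
  have e2 : ∀ p : ℝ, Real.sin (α * ρ) ^ (p - 2)
      = Real.sin (α * ρ) ^ p / Real.sin (α * ρ) ^ 2 := by
    intro p
    rw [Real.rpow_sub hs, show ((2:ℝ) = ((2:ℕ):ℝ)) by norm_num, Real.rpow_natCast]
  rw [e1, e1, e2, e2]
  have hA : Real.sin (α * ρ) ^ ((4 * c - 1) / (6 * c - 1)) ≠ 0 :=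
    (Real.rpow_pos_of_pos hs _).ne'
  have hB : Real.sin (α * ρ) ^ (2 * c / (6 * c - 1)) ≠ 0 :=
    (Real.rpow_pos_of_pos hs _).ne'
  have hd6' : c * 6 - 1 ≠ 0 := by linarith
  field_simp
  ring
end

section
/- Let n ≥ 2 be an integer and let A be a self-adjoint endomorphism of an n-dimensional real inner product space with trace A = 0. Then for every unit vector v, ‖A‖² ≥ (n/(n−1))·‖A v‖², where ‖A‖² denotes the squared Frobenius (Hilbert–Schmidt) norm of A. -/
open Finset
open scoped RealInnerProductSpace

lemma trace_eq_sum_inner' {E : Type*} [NormedAddCommGroup E]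
    [InnerProductSpace ℝ E] [FiniteDimensional ℝ E] {n : ℕ}
    (b : OrthonormalBasis (Fin n) ℝ E) (T : E →ₗ[ℝ] E) :
    LinearMap.trace ℝ E T = ∑ i, ⟪b i, T (b i)⟫ := by
  rw [LinearMap.trace_eq_matrix_trace ℝ b.toBasis T, Matrix.trace]
  congr 1
  ext i
  rw [Matrix.diag_apply, LinearMap.toMatrix_apply, b.coe_toBasis,
    b.coe_toBasis_repr_apply, b.repr_apply_apply]

lemma key_ineq (n : ℕ) (hn : 2 ≤ n) (μ c : Fin n → ℝ)
    (hμ : ∑ i, μ i = 0) (hc : ∑ i, c i ^ 2 = 1) :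
    ((n : ℝ) / ((n : ℝ) - 1)) * ∑ i, μ i ^ 2 * c i ^ 2 ≤ ∑ i, μ i ^ 2 := by
  have hn1 : (0 : ℝ) < (n : ℝ) - 1 := by
    have : (2 : ℝ) ≤ n := by exact_mod_cast hn
    linarith
  have hnpos : (0 : ℝ) < n := by linarith
  set S := ∑ i, μ i ^ 2 with hS
  have hmax : ∀ k, (n : ℝ) * μ k ^ 2 ≤ ((n : ℝ) - 1) * S := by
    intro k
    have h1 : μ k = -(∑ i ∈ univ.erase k, μ i) := by
      have := Finset.add_sum_erase univ μ (mem_univ k)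
      linarith [hμ ▸ this]
    have h2 : (∑ i ∈ univ.erase k, μ i) ^ 2 ≤
        (#(univ.erase k) : ℝ) * ∑ i ∈ univ.erase k, μ i ^ 2 := by
      exact_mod_cast sq_sum_le_card_mul_sum_sq (s := univ.erase k) (f := μ)
    have hcard : (#((univ : Finset (Fin n)).erase k) : ℝ) = (n : ℝ) - 1 := by
      rw [Finset.card_erase_of_mem (mem_univ k)]
      simp
      have : 1 ≤ n := by omega
      push_cast [this]
      ring
    have h3 : ∑ i ∈ univ.erase k, μ i ^ 2 = S - μ k ^ 2 := by
      have := Finset.add_sum_erase univ (fun i => μ i ^ 2) (mem_univ k)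
      rw [hS]; linarith
    have h4 : μ k ^ 2 ≤ ((n : ℝ) - 1) * (S - μ k ^ 2) := by
      calc μ k ^ 2 = (∑ i ∈ univ.erase k, μ i) ^ 2 := by rw [h1]; ring
        _ ≤ ((n : ℝ) - 1) * (S - μ k ^ 2) := by rw [← h3, ← hcard]; exact h2
    nlinarith
  have hbound : ∑ i, μ i ^ 2 * c i ^ 2 ≤ (((n : ℝ) - 1) / n * S) := by
    calc ∑ i, μ i ^ 2 * c i ^ 2
        ≤ ∑ i, (((n : ℝ) - 1) / n * S) * c i ^ 2 := by
          apply Finset.sum_le_sum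
          intro i _
          apply mul_le_mul_of_nonneg_right _ (sq_nonneg _)
          have := hmax i
          rw [div_mul_eq_mul_div, le_div_iff₀ hnpos]
          linarith
      _ = (((n : ℝ) - 1) / n * S) := by rw [← Finset.mul_sum, hc, mul_one]
  calc ((n : ℝ) / ((n : ℝ) - 1)) * ∑ i, μ i ^ 2 * c i ^ 2
      ≤ ((n : ℝ) / ((n : ℝ) - 1)) * (((n : ℝ) - 1) / n * S) := by
        apply mul_le_mul_of_nonneg_left hbound
        positivity
    _ = S := by field_simp

lemma norm_sq_eq_sum_repr {E : Type*} [NormedAddCommGroup E]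
    [InnerProductSpace ℝ E] [FiniteDimensional ℝ E] {n : ℕ}
    (b : OrthonormalBasis (Fin n) ℝ E) (x : E) :
    ‖x‖ ^ 2 = ∑ i, (b.repr x i) ^ 2 := by
  rw [← b.repr.norm_map x, EuclideanSpace.norm_eq, Real.sq_sqrt (by positivity)]
  simp [Real.norm_eq_abs, sq_abs]

/-- Refined Kato-type inequality: a trace-free self-adjoint endomorphism `A` of an
`n`-dimensional real inner product space satisfies
`‖A‖_F² ≥ (n/(n−1)) ‖A v‖²` for every unit vector `v`, where the squared Frobenius
norm is computed via any orthonormal basis. -/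
theorem traceless_symmetric_kato {E : Type*} [NormedAddCommGroup E]
    [InnerProductSpace ℝ E] [FiniteDimensional ℝ E]
    (n : ℕ) (hn : 2 ≤ n) (hdim : Module.finrank ℝ E = n)
    (A : E →ₗ[ℝ] E) (hA : A.IsSymmetric) (htr : LinearMap.trace ℝ E A = 0) :
    ∀ (bas : OrthonormalBasis (Fin n) ℝ E) (v : E), ‖v‖ = 1 →
      ((n : ℝ) / ((n : ℝ) - 1)) * ‖A v‖ ^ 2 ≤ ∑ i, ‖A (bas i)‖ ^ 2 := by
  intro bas v hv
  classical
  set b := hA.eigenvectorBasis hdim with hb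
  set μ := hA.eigenvalues hdim with hμdef
  have happ : ∀ i, A (b i) = (μ i : ℝ) • b i := fun i => hA.apply_eigenvectorBasis hdim i
  have hbnorm : ∀ i, ⟪b i, b i⟫ = (1 : ℝ) := by
    intro i
    rw [real_inner_self_eq_norm_sq, b.orthonormal.1 i]; norm_num
  have hμ0 : ∑ i, μ i = 0 := by
    have h := trace_eq_sum_inner' b A
    rw [htr] at h
    have heach : ∀ i, ⟪b i, A (b i)⟫ = μ i := by
      intro i
      rw [happ i, real_inner_smul_right, hbnorm i, mul_one]
    rw [Finset.sum_congr rfl fun i _ => heach i] at h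
    linarith
  have hF : ∑ i, ‖A (bas i)‖ ^ 2 = ∑ i, μ i ^ 2 := by
    have h1 : ∑ i, ‖A (bas i)‖ ^ 2 = LinearMap.trace ℝ E (A ∘ₗ A) := by
      rw [trace_eq_sum_inner' bas]
      refine Finset.sum_congr rfl fun i _ => ?_
      rw [LinearMap.comp_apply, ← hA (bas i) (A (bas i)), real_inner_self_eq_norm_sq]
    have h2 : LinearMap.trace ℝ E (A ∘ₗ A) = ∑ i, μ i ^ 2 := by
      rw [trace_eq_sum_inner' b]
      refine Finset.sum_congr rfl fun i _ => ?_
      rw [LinearMap.comp_apply, happ i, map_smul, happ i, smul_smul,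
        real_inner_smul_right, hbnorm i]
      ring
    rw [h1, h2]
  have hrepr : ∀ i, b.repr (A v) i = μ i * b.repr v i :=
    fun i => hA.eigenvectorBasis_apply_self_apply hdim v i
  have hAv : ‖A v‖ ^ 2 = ∑ i, μ i ^ 2 * (b.repr v i) ^ 2 := by
    rw [norm_sq_eq_sum_repr b (A v)]
    refine Finset.sum_congr rfl fun i _ => ?_
    rw [hrepr i]; ring
  have hv2 : ∑ i, (b.repr v i) ^ 2 = 1 := by
    rw [← norm_sq_eq_sum_repr b v, hv]; norm_num
  rw [hF, hAv]
  exact key_ineq n hn μ (fun i => b.repr v i) hμ0 hv2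
end
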